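/- Every element of the pseudo-orthogonal group O(p,q) can be written as a product of at most p+q reflections across non-degenerate hyperplanes in ℝ^{p+q}. -/

import Mathlib

open scoped BigOperators

/-- The standard bilinear form of signature (p,q) on ℝ^{p+q}. -/
def etaPQ (p q : ℕ) (v w : Fin (p + q) → ℝ) : ℝ :=
  ∑ i : Fin (p + q), if i.val < p then v i * w i else -(v i * w i)

/-- The reflection across the hyperplane perpendicular to `e` (with η(e,e) ≠ 0). -/
noncomputable def reflectPQ (p q : ℕ) (e v : Fin (p + q) → ℝ) : Fin (p + q) → ℝ :=
  v - (2 * etaPQ p q e v / etaPQ p q e e) • e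

namespace CD

variable {p q : ℕ}

lemma eta_add_left (a b w : Fin (p+q) → ℝ) :
    etaPQ p q (a + b) w = etaPQ p q a w + etaPQ p q b w := by
  unfold etaPQ
  rw [← Finset.sum_add_distrib]
  refine Finset.sum_congr rfl fun i _ => ?_
  simp only [Pi.add_apply]; split_ifs <;> ring

lemma eta_smul_left (c : ℝ) (a w : Fin (p+q) → ℝ) :
    etaPQ p q (c • a) w = c * etaPQ p q a w := by
  unfold etaPQ
  rw [Finset.mul_sum]
  refine Finset.sum_congr rfl fun i _ => ?_
  simp only [Pi.smul_apply, smul_eq_mul]; split_ifs <;> ring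

lemma eta_comm (v w : Fin (p+q) → ℝ) : etaPQ p q v w = etaPQ p q w v := by
  unfold etaPQ
  refine Finset.sum_congr rfl fun i _ => ?_
  split_ifs <;> ring

lemma eta_add_right (a v w : Fin (p+q) → ℝ) :
    etaPQ p q a (v + w) = etaPQ p q a v + etaPQ p q a w := by
  rw [eta_comm, eta_add_left, eta_comm v a, eta_comm w a]

lemma eta_smul_right (c : ℝ) (a w : Fin (p+q) → ℝ) :
    etaPQ p q a (c • w) = c * etaPQ p q a w := by
  rw [eta_comm, eta_smul_left, eta_comm w a]

/-- The form as a bundled bilinear form. -/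
noncomputable def EB (p q : ℕ) : LinearMap.BilinForm ℝ (Fin (p+q) → ℝ) :=
  LinearMap.mk₂ ℝ (etaPQ p q) eta_add_left (fun c a w => eta_smul_left c a w)
    eta_add_right (fun c a w => eta_smul_right c a w)

@[simp] lemma EB_apply (v w : Fin (p+q) → ℝ) : EB p q v w = etaPQ p q v w := rfl

lemma eta_sub_left (a b w : Fin (p+q) → ℝ) :
    etaPQ p q (a - b) w = etaPQ p q a w - etaPQ p q b w := by
  unfold etaPQ
  rw [← Finset.sum_sub_distrib]
  refine Finset.sum_congr rfl fun i _ => ?_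
  simp only [Pi.sub_apply]; split_ifs <;> ring

lemma eta_sub_right (a v w : Fin (p+q) → ℝ) :
    etaPQ p q a (v - w) = etaPQ p q a v - etaPQ p q a w := by
  rw [eta_comm, eta_sub_left, eta_comm v a, eta_comm w a]

lemma eta_single (v : Fin (p+q) → ℝ) (i : Fin (p+q)) :
    etaPQ p q v (Pi.single i 1) = if i.val < p then v i else - v i := by
  unfold etaPQ
  rw [Finset.sum_eq_single i]
  · simp
  · intro j _ hj
    have hz : Pi.single (M := fun _ : Fin (p+q) => ℝ) i 1 j = 0 := Pi.single_eq_of_ne hj 1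
    rw [hz]; split_ifs <;> ring
  · simp

lemma EB_nondeg : (EB p q).Nondegenerate := by
  have hL : LinearMap.SeparatingLeft (EB p q) := by
    intro v hv
    funext i
    have := hv (Pi.single i 1)
    rw [EB_apply, eta_single] at this
    by_cases h : i.val < p
    · simpa [h] using this
    · simp only [h, if_false] at this
      simpa using neg_eq_zero.mp this
  exact ⟨hL, fun v hv => hL v (fun w => by rw [EB_apply, eta_comm]; exact hv w)⟩

lemma EB_refl : (EB p q).IsRefl := by
  intro v w h
  rwa [EB_apply, eta_comm] at h

lemma eta_isotropic_of_forall {H : Submodule ℝ (Fin (p+q) → ℝ)}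
    (h : ∀ x ∈ H, etaPQ p q x x = 0) :
    ∀ x ∈ H, ∀ y ∈ H, etaPQ p q x y = 0 := by
  intro x hx y hy
  have hxy := h (x + y) (H.add_mem hx hy)
  rw [eta_add_left, eta_add_right, eta_add_right, h x hx, h y hy, eta_comm y x] at hxy
  linarith


section Reflect
variable {p q : ℕ}

lemma reflect_def (e v : Fin (p+q) → ℝ) :
    reflectPQ p q e v = v - (2 * etaPQ p q e v / etaPQ p q e e) • e := rfl

/-- The reflection as a linear map. -/
noncomputable def rmap (p q : ℕ) (e : Fin (p+q) → ℝ) : (Fin (p+q) → ℝ) →ₗ[ℝ] (Fin (p+q) → ℝ) :=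
  LinearMap.id - (2 / etaPQ p q e e) • ((EB p q e).smulRight e)

lemma rmap_apply (e v : Fin (p+q) → ℝ) : rmap p q e v = reflectPQ p q e v := by
  show v - (2 / etaPQ p q e e) • (etaPQ p q e v • e) = v - (2 * etaPQ p q e v / etaPQ p q e e) • e
  rw [smul_smul]
  ring_nf

lemma eta_reflect_left (e v w : Fin (p+q) → ℝ) :
    etaPQ p q (reflectPQ p q e v) w
      = etaPQ p q v w - (2 * etaPQ p q e v / etaPQ p q e e) * etaPQ p q e w := by
  rw [reflect_def, eta_sub_left, eta_smul_left]

lemma eta_reflect_right (e v w : Fin (p+q) → ℝ) :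
    etaPQ p q w (reflectPQ p q e v)
      = etaPQ p q w v - (2 * etaPQ p q e v / etaPQ p q e e) * etaPQ p q w e := by
  rw [eta_comm, eta_reflect_left, eta_comm v w, eta_comm e w]

lemma reflect_iso (e : Fin (p+q) → ℝ) (he : etaPQ p q e e ≠ 0) (v w : Fin (p+q) → ℝ) :
    etaPQ p q (reflectPQ p q e v) (reflectPQ p q e w) = etaPQ p q v w := by
  rw [eta_reflect_left, eta_reflect_right, eta_reflect_right, eta_comm e v]
  field_simp
  ring

lemma reflect_fix (e w : Fin (p+q) → ℝ) (h : etaPQ p q e w = 0) :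
    reflectPQ p q e w = w := by
  rw [reflect_def, h]
  simp

lemma reflect_reflect (e : Fin (p+q) → ℝ) (he : etaPQ p q e e ≠ 0) (v : Fin (p+q) → ℝ) :
    reflectPQ p q e (reflectPQ p q e v) = v := by
  have h1 : etaPQ p q e (reflectPQ p q e v) = - etaPQ p q e v := by
    rw [eta_reflect_right]
    field_simp
    ring
  rw [reflect_def, h1, reflect_def]
  have : 2 * - etaPQ p q e v / etaPQ p q e e = -(2 * etaPQ p q e v / etaPQ p q e e) := by ring
  rw [this, neg_smul, sub_neg_eq_add, sub_add_cancel]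

lemma reflect_swap (x y : Fin (p+q) → ℝ) (hxy : etaPQ p q x x = etaPQ p q y y)
    (he : etaPQ p q (x - y) (x - y) ≠ 0) :
    reflectPQ p q (x - y) x = y := by
  have hc : 2 * etaPQ p q (x - y) x = etaPQ p q (x - y) (x - y) := by
    simp only [eta_sub_left, eta_sub_right]
    rw [eta_comm y x, hxy]
    ring
  rw [reflect_def, hc, div_self he, one_smul]
  abel

lemma reflect_neg_self (e : Fin (p+q) → ℝ) (he : etaPQ p q e e ≠ 0) :
    reflectPQ p q e e = -e := by
  rw [reflect_def, mul_div_assoc, div_self he, mul_one, two_smul]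
  abel

end Reflect


section Det
variable {p q : ℕ}

open Matrix Polynomial

lemma det_rmap (e : Fin (p+q) → ℝ) (he : etaPQ p q e e ≠ 0) :
    LinearMap.det (rmap p q e) = -1 := by
  rw [← LinearMap.det_toMatrix']
  have hM : LinearMap.toMatrix' (rmap p q e)
      = 1 + Matrix.replicateCol (Fin 1) (fun i => (-(2 / etaPQ p q e e)) * e i)
          * Matrix.replicateRow (Fin 1) (fun j => if (j:Fin (p+q)).val < p then e j else - e j) := by
    ext i j
    rw [LinearMap.toMatrix'_apply]
    have hsingle : (fun j' => if j' = j then (1:ℝ) else 0) = Pi.single j 1 := by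
      funext j'
      by_cases h : j' = j <;> simp [h, Pi.single_apply]
    rw [rmap_apply, reflect_def, eta_single]
    simp only [Matrix.add_apply, Matrix.one_apply, Matrix.replicateCol_apply, Matrix.replicateRow_apply,
      Matrix.mul_apply, Pi.sub_apply, Pi.smul_apply, smul_eq_mul, Finset.sum_const,
      Finset.card_univ, Fintype.card_fin, one_smul]
    by_cases h : i = j <;> simp [h, Pi.single_apply] <;> split_ifs <;> ring
  rw [hM]; erw [Matrix.det_one_add_replicateCol_mul_replicateRow]
  have hsum : (fun j => if (j: Fin (p+q)).val < p then e j else - e j) ⬝ᵥ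
      (fun i => (-(2 / etaPQ p q e e)) * e i) = -(2 / etaPQ p q e e) * etaPQ p q e e := by
    rw [dotProduct]
    unfold etaPQ
    rw [Finset.mul_sum]
    refine Finset.sum_congr rfl fun i _ => ?_
    split_ifs <;> ring
  rw [hsum]
  field_simp
  ring

lemma det_one_add_of_sq {n : ℕ} (A : Matrix (Fin n) (Fin n) ℝ) (h : A * A = 0) :
    (1 + A).det = 1 := by
  have hn : IsNilpotent A := ⟨2, by rwa [pow_two]⟩
  obtain ⟨r, hr, hCr⟩ := Polynomial.isUnit_iff.mp (Matrix.isUnit_charpolyRev_of_isNilpotent hn)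
  have h0 : Polynomial.eval 0 (A.charpolyRev) = 1 := Matrix.eval_charpolyRev
  rw [← hCr, eval_C] at h0
  have hcp : A.charpolyRev = 1 := by rw [← hCr, h0, Polynomial.C_1]
  have hmap := RingHom.map_det (Polynomial.evalRingHom (-1 : ℝ))
    (1 - (Polynomial.X : ℝ[X]) • A.map Polynomial.C)
  have hL : (Polynomial.evalRingHom (-1 : ℝ))
      (Matrix.det (1 - (Polynomial.X : ℝ[X]) • A.map Polynomial.C)) = 1 := by
    rw [← Matrix.charpolyRev, hcp]
    simp
  have hR : (Polynomial.evalRingHom (-1 : ℝ)).mapMatrix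
      (1 - (Polynomial.X : ℝ[X]) • A.map Polynomial.C) = 1 + A := by
    ext i j
    by_cases h : i = j <;>
      simp [h, Matrix.one_apply, Matrix.map_apply]
  rw [hmap, hR] at hL
  exact hL

lemma det_id_add_of_sq (σ : (Fin (p+q) → ℝ) →ₗ[ℝ] (Fin (p+q) → ℝ))
    (h : σ ∘ₗ σ = 0) : LinearMap.det (LinearMap.id + σ) = 1 := by
  rw [← LinearMap.det_toMatrix']
  have : LinearMap.toMatrix' (LinearMap.id + σ) = 1 + LinearMap.toMatrix' σ := by
    rw [map_add, LinearMap.toMatrix'_id]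
  rw [this]
  apply det_one_add_of_sq
  rw [← LinearMap.toMatrix'_comp, h, map_zero]

lemma det_foldr : ∀ (l : List (Fin (p+q) → ℝ)) (f : (Fin (p+q) → ℝ) →ₗ[ℝ] (Fin (p+q) → ℝ)),
    (∀ e ∈ l, etaPQ p q e e ≠ 0) → (∀ v, f v = l.foldr (reflectPQ p q) v) →
    LinearMap.det f = (-1) ^ l.length := by
  intro l
  induction l with
  | nil =>
    intro f _ hf
    have : f = LinearMap.id := by
      apply LinearMap.ext; intro v; simpa using hf v
    rw [this]
    simp
  | cons e l ih =>
    intro f hval hf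
    have he : etaPQ p q e e ≠ 0 := hval e List.mem_cons_self
    have hg : ∀ v, ((rmap p q e) ∘ₗ f) v = l.foldr (reflectPQ p q) v := by
      intro v
      have := hf v
      simp only [List.foldr_cons] at this
      simp only [LinearMap.comp_apply, this, rmap_apply]
      exact reflect_reflect e he _
    have hdet := ih ((rmap p q e) ∘ₗ f) (fun x hx => hval x (List.mem_cons_of_mem e hx)) hg
    rw [LinearMap.det_comp, det_rmap e he] at hdet
    have : LinearMap.det f = -(-1:ℝ)^l.length := by linarith
    rw [this, List.length_cons, pow_succ]
    ring

end Det


section Bad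
variable {p q : ℕ}

open Polynomial Module

/-- If a quadratic polynomial vanishes wherever another one (with nonzero leading
coefficient) is nonzero, then its constant term vanishes. -/
lemma quad_aux (a b c a' b' c' : ℝ) (ha : a ≠ 0)
    (h : ∀ t : ℝ, c + b * t + a * t ^ 2 ≠ 0 → c' + b' * t + a' * t ^ 2 = 0) : c' = 0 := by
  set P : ℝ[X] := C c + C b * X + C a * X ^ 2 with hP
  set P' : ℝ[X] := C c' + C b' * X + C a' * X ^ 2 with hP'
  have hevP : ∀ t : ℝ, P.eval t = c + b * t + a * t ^ 2 := by intro t; simp [hP]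
  have hevP' : ∀ t : ℝ, P'.eval t = c' + b' * t + a' * t ^ 2 := by intro t; simp [hP']
  have hPne : P ≠ 0 := by
    intro h0
    have := congrArg (fun r => Polynomial.coeff r 2) h0
    simp [hP, coeff_one, Polynomial.coeff_X, Polynomial.coeff_C] at this
    exact ha this
  have hfin : Set.Finite {t : ℝ | P.IsRoot t} := Polynomial.finite_setOf_isRoot hPne
  have hsub : {t : ℝ | P.IsRoot t}ᶜ ⊆ {t : ℝ | P'.IsRoot t} := by
    intro t ht
    have : P.eval t ≠ 0 := ht
    rw [hevP] at this
    have := h t this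
    simpa [Polynomial.IsRoot, hevP'] using this
  have hinf : Set.Infinite {t : ℝ | P'.IsRoot t} :=
    Set.Infinite.mono hsub (Set.Finite.infinite_compl hfin)
  have hP0 : P' = 0 := Polynomial.eq_zero_of_infinite_isRoot P' hinf
  have := congrArg (fun r : ℝ[X] => r.eval 0) hP0
  simpa [hevP'] using this

open LinearMap.BilinForm in
lemma mem_orthH {S : Submodule ℝ (Fin (p+q) → ℝ)} {x : Fin (p+q) → ℝ} :
    x ∈ (EB p q).orthogonal S ↔ ∀ s ∈ S, etaPQ p q s x = 0 := by
  rw [LinearMap.BilinForm.mem_orthogonal_iff]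
  rfl

lemma finrank_V : finrank ℝ (Fin (p+q) → ℝ) = p + q := by
  exact Module.finrank_fin_fun ℝ

lemma finrank_orthH (S : Submodule ℝ (Fin (p+q) → ℝ)) :
    finrank ℝ ((EB p q).orthogonal S) = (p+q) - finrank ℝ S := by
  rw [LinearMap.BilinForm.finrank_orthogonal EB_nondeg S, finrank_V]

lemma sup_orthH_eq_top {S : Submodule ℝ (Fin (p+q) → ℝ)}
    (hSd : Disjoint S ((EB p q).orthogonal S)) :
    S ⊔ (EB p q).orthogonal S = ⊤ := by
  apply Submodule.eq_top_of_finrank_eq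
  have h1 := Submodule.finrank_sup_add_finrank_inf_eq S ((EB p q).orthogonal S)
  rw [disjoint_iff.mp hSd, finrank_bot, add_zero] at h1
  rw [h1, finrank_orthH, finrank_V]
  have hle : finrank ℝ S ≤ finrank ℝ (Fin (p+q) → ℝ) := Submodule.finrank_le S
  rw [finrank_V] at hle
  omega

lemma decompSH {S : Submodule ℝ (Fin (p+q) → ℝ)}
    (hSd : Disjoint S ((EB p q).orthogonal S)) (v : Fin (p+q) → ℝ) :
    ∃ s ∈ S, ∃ h ∈ (EB p q).orthogonal S, v = s + h := by
  have : v ∈ S ⊔ (EB p q).orthogonal S := by rw [sup_orthH_eq_top hSd]; trivial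
  obtain ⟨s, hs, h, hh, rfl⟩ := Submodule.mem_sup.mp this
  exact ⟨s, hs, h, hh, rfl⟩

lemma f_mem_orthH {f : (Fin (p+q) → ℝ) →ₗ[ℝ] (Fin (p+q) → ℝ)}
    (hf : ∀ v w, etaPQ p q (f v) (f w) = etaPQ p q v w)
    {S : Submodule ℝ (Fin (p+q) → ℝ)} (hS : ∀ s ∈ S, f s = s)
    {v : Fin (p+q) → ℝ} (hv : v ∈ (EB p q).orthogonal S) : f v ∈ (EB p q).orthogonal S := by
  rw [mem_orthH] at hv ⊢
  intro s hs
  calc etaPQ p q s (f v) = etaPQ p q (f s) (f v) := by rw [hS s hs]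
  _ = etaPQ p q s v := hf s v
  _ = 0 := hv s hs

/-- Structure of "bad" isometries: identity on a nondegenerate `S`, no anisotropic fixed
vectors in `H := S^⊥`, and `f v - v` isotropic for every anisotropic `v ∈ H`.
Then `det f = 1` and `dim H` is even. -/
lemma bad_struct (f : (Fin (p+q) → ℝ) →ₗ[ℝ] (Fin (p+q) → ℝ))
    (hf : ∀ v w, etaPQ p q (f v) (f w) = etaPQ p q v w)
    (S : Submodule ℝ (Fin (p+q) → ℝ)) (hS : ∀ s ∈ S, f s = s)
    (hSd : Disjoint S ((EB p q).orthogonal S))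
    (h1 : ∀ v ∈ (EB p q).orthogonal S, etaPQ p q v v ≠ 0 → f v ≠ v)
    (h2 : ∀ v ∈ (EB p q).orthogonal S, etaPQ p q v v ≠ 0 →
      etaPQ p q (f v - v) (f v - v) = 0) :
    LinearMap.det f = 1 ∧ Even (finrank ℝ ((EB p q).orthogonal S)) := by
  classical
  set H := (EB p q).orthogonal S with hH
  set σ := f - LinearMap.id with hσdef
  have hσ_apply : ∀ v, σ v = f v - v := fun v => rfl
  have hσS : ∀ s ∈ S, σ s = 0 := by
    intro s hs; rw [hσ_apply, hS s hs, sub_self]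
  by_cases hexu : ∃ u ∈ H, etaPQ p q u u ≠ 0
  · obtain ⟨u, huH, huQ⟩ := hexu
    -- every σ x, x ∈ H, is isotropic
    have hQσH : ∀ x ∈ H, etaPQ p q (σ x) (σ x) = 0 := by
      intro x hx
      have key : ∀ t : ℝ, etaPQ p q x x + (2 * etaPQ p q x u) * t + etaPQ p q u u * t ^ 2 ≠ 0 →
          etaPQ p q (σ x) (σ x) + (2 * etaPQ p q (σ x) (σ u)) * t
            + etaPQ p q (σ u) (σ u) * t ^ 2 = 0 := by
        intro t ht
        have hxt : x + t • u ∈ H := H.add_mem hx (H.smul_mem t huH)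
        have hQxt : etaPQ p q (x + t • u) (x + t • u)
            = etaPQ p q x x + (2 * etaPQ p q x u) * t + etaPQ p q u u * t ^ 2 := by
          simp only [eta_add_left, eta_add_right, eta_smul_left, eta_smul_right]
          rw [eta_comm u x]; ring
        have hQne : etaPQ p q (x + t • u) (x + t • u) ≠ 0 := by rw [hQxt]; exact ht
        have := h2 _ hxt hQne
        have hσxt : f (x + t • u) - (x + t • u) = σ x + t • σ u := by
          simp only [hσ_apply, map_add, map_smul]
          module
        rw [hσxt] at this
        calc etaPQ p q (σ x) (σ x) + (2 * etaPQ p q (σ x) (σ u)) * t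
              + etaPQ p q (σ u) (σ u) * t ^ 2
            = etaPQ p q (σ x + t • σ u) (σ x + t • σ u) := by
              simp only [eta_add_left, eta_add_right, eta_smul_left, eta_smul_right]
              rw [eta_comm (σ u) (σ x)]; ring
        _ = 0 := this
      exact quad_aux (etaPQ p q u u) (2 * etaPQ p q x u) (etaPQ p q x x)
        (etaPQ p q (σ u) (σ u)) (2 * etaPQ p q (σ x) (σ u)) (etaPQ p q (σ x) (σ x)) huQ
        (fun t ht => key t ht)
    -- σ of anything lands in H
    have hσ_mem : ∀ v, σ v ∈ H := by
      intro v
      obtain ⟨s, hs, h, hh, rfl⟩ := decompSH hSd v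
      have : σ (s + h) = σ h := by
        rw [map_add, hσS s hs, zero_add]
      rw [this, hσ_apply]
      exact H.sub_mem (f_mem_orthH hf hS hh) hh
    -- σ of anything is isotropic
    have hQσ : ∀ v, etaPQ p q (σ v) (σ v) = 0 := by
      intro v
      obtain ⟨s, hs, h, hh, rfl⟩ := decompSH hSd v
      have : σ (s + h) = σ h := by rw [map_add, hσS s hs, zero_add]
      rw [this]
      exact hQσH h hh
    -- range of σ is totally isotropic
    have hσiso : ∀ v w, etaPQ p q (σ v) (σ w) = 0 := by
      intro v w
      have hvw := hQσ (v + w)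
      rw [map_add, eta_add_left, eta_add_right, eta_add_right, hQσ v, hQσ w,
        eta_comm (σ w) (σ v)] at hvw
      linarith
    set W := LinearMap.ker σ with hW
    have hfix : ∀ w ∈ W, f w = w := by
      intro w hw
      have : σ w = 0 := hw
      rw [hσ_apply] at this
      exact sub_eq_zero.mp this
    have hWperp : ∀ v, ∀ w ∈ W, etaPQ p q w (σ v) = 0 := by
      intro v w hw
      rw [hσ_apply, eta_sub_right]
      have heq : etaPQ p q w (f v) = etaPQ p q w v := by
        conv_lhs => rw [← hfix w hw]
        exact hf w v
      rw [heq, sub_self]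
    set WH := W ⊓ H with hWHdef
    have hWH_iso0 : ∀ x ∈ WH, etaPQ p q x x = 0 := by
      intro x hx
      by_contra hQ
      exact h1 x hx.2 hQ (hfix x hx.1)
    have hWH_iso : ∀ x ∈ WH, ∀ y ∈ WH, etaPQ p q x y = 0 :=
      eta_isotropic_of_forall hWH_iso0
    have hW_eq : W = S ⊔ WH := by
      apply le_antisymm
      · intro w hw
        obtain ⟨s, hs, h, hh, rfl⟩ := decompSH hSd w
        have hσh : σ h = 0 := by
          have hz : σ (s + h) = 0 := LinearMap.mem_ker.mp hw
          rw [map_add, hσS s hs, zero_add] at hz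
          exact hz
        exact Submodule.mem_sup.mpr ⟨s, hs, h, ⟨LinearMap.mem_ker.mpr hσh, hh⟩, rfl⟩
      · rw [sup_le_iff]
        constructor
        · intro s hs
          exact LinearMap.mem_ker.mpr (hσS s hs)
        · exact inf_le_left
    have hdisj2 : Disjoint S WH := hSd.mono_right inf_le_right
    have hrankW : finrank ℝ W = finrank ℝ S + finrank ℝ WH := by
      rw [hW_eq]
      have hh := Submodule.finrank_sup_add_finrank_inf_eq S WH
      rw [disjoint_iff.mp hdisj2, finrank_bot, add_zero] at hh
      exact hh
    have hrn := LinearMap.finrank_range_add_finrank_ker σ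
    rw [finrank_V, ← hW] at hrn
    have hr_le : LinearMap.range σ ≤ (EB p q).orthogonal W := by
      rintro _ ⟨v, rfl⟩
      rw [mem_orthH]
      exact fun w hw => hWperp v w hw
    have hofW : finrank ℝ ((EB p q).orthogonal W) = (p+q) - finrank ℝ W := finrank_orthH W
    have hr_eq : LinearMap.range σ = (EB p q).orthogonal W := by
      apply Submodule.eq_of_le_of_finrank_le hr_le
      rw [hofW]
      omega
    have hWH_le : WH ≤ (EB p q).orthogonal W := by
      intro x hx
      rw [mem_orthH]
      intro w hw
      rw [hW_eq] at hw
      obtain ⟨s, hs, y, hy, rfl⟩ := Submodule.mem_sup.mp hw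
      rw [eta_add_left]
      have hsx : etaPQ p q s x = 0 := mem_orthH.mp hx.2 s hs
      rw [hsx, hWH_iso y hy x hx, add_zero]
    have hrange_H : LinearMap.range σ ≤ H := by
      rintro _ ⟨v, rfl⟩
      exact hσ_mem v
    have hr_le2 : LinearMap.range σ ≤ (EB p q).orthogonal (S ⊔ LinearMap.range σ) := by
      rintro _ ⟨v, rfl⟩
      rw [mem_orthH]
      intro y hy
      obtain ⟨s, hs, z, hz, rfl⟩ := Submodule.mem_sup.mp hy
      obtain ⟨w, rfl⟩ := hz
      rw [eta_add_left, hσiso w v]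
      have hsσ : etaPQ p q s (σ v) = 0 := mem_orthH.mp (hσ_mem v) s hs
      rw [hsσ, add_zero]
    have hdisj3 : Disjoint S (LinearMap.range σ) := hSd.mono_right hrange_H
    have hdim_sup : finrank ℝ (S ⊔ LinearMap.range σ : Submodule ℝ _)
        = finrank ℝ S + finrank ℝ (LinearMap.range σ) := by
      have hh := Submodule.finrank_sup_add_finrank_inf_eq S (LinearMap.range σ)
      rw [disjoint_iff.mp hdisj3, finrank_bot, add_zero] at hh
      exact hh
    have hineq1 : finrank ℝ (LinearMap.range σ)
        ≤ (p+q) - (finrank ℝ S + finrank ℝ (LinearMap.range σ)) := by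
      have hh := Submodule.finrank_mono hr_le2
      rwa [finrank_orthH, hdim_sup] at hh
    have hineq2 : finrank ℝ WH ≤ finrank ℝ (LinearMap.range σ) := by
      have hh := Submodule.finrank_mono hWH_le
      rwa [← hr_eq] at hh
    have hSle : finrank ℝ S + finrank ℝ WH + finrank ℝ (LinearMap.range σ) = p + q := by
      omega
    have hWH_eq_range : WH = LinearMap.range σ := by
      rw [hr_eq]
      apply Submodule.eq_of_le_of_finrank_le hWH_le
      rw [hofW]
      omega
    have hrange_W : LinearMap.range σ ≤ W := by
      rw [← hWH_eq_range]
      exact inf_le_left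
    have hσσ : σ ∘ₗ σ = 0 := by
      apply LinearMap.ext
      intro v
      have : σ v ∈ W := hrange_W ⟨v, rfl⟩
      simpa using LinearMap.mem_ker.mp this
    have hfσ : f = LinearMap.id + σ := by
      apply LinearMap.ext
      intro v
      simp [hσ_apply]
    constructor
    · rw [hfσ]
      exact det_id_add_of_sq σ hσσ
    · rw [finrank_orthH]
      have heven : (p+q) - finrank ℝ S = 2 * finrank ℝ WH := by omega
      rw [heven]
      exact even_two_mul _
  · -- no anisotropic vectors in H at all: then H = ⊥ and f = id
    push_neg at hexu
    have hHbot : H = ⊥ := by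
      rw [Submodule.eq_bot_iff]
      intro x hx
      apply EB_nondeg.1
      intro w
      obtain ⟨s, hs, h, hh, rfl⟩ := decompSH hSd w
      rw [EB_apply, eta_add_right]
      have h1' : etaPQ p q x s = 0 := by
        rw [eta_comm]
        exact mem_orthH.mp hx s hs
      have h2' : etaPQ p q x h = 0 :=
        eta_isotropic_of_forall hexu x hx h hh
      rw [h1', h2', add_zero]
    have hfid : f = LinearMap.id := by
      apply LinearMap.ext
      intro v
      obtain ⟨s, hs, h, hh, rfl⟩ := decompSH hSd v
      have hh' : h ∈ H := hh
      rw [hHbot] at hh'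
      have hz : h = 0 := hh'
      subst hz
      simpa using hS s hs
    constructor
    · rw [hfid]; exact LinearMap.det_id
    · rw [hHbot]
      simp
end Bad

section Main
variable {p q : ℕ}
open Module Polynomial

lemma orth_bot_of_isotropic {S : Submodule ℝ (Fin (p+q) → ℝ)}
    (hSd : Disjoint S ((EB p q).orthogonal S))
    (hiso : ∀ u ∈ (EB p q).orthogonal S, etaPQ p q u u = 0) :
    (EB p q).orthogonal S = ⊥ := by
  rw [Submodule.eq_bot_iff]
  intro x hx
  apply EB_nondeg.1
  intro w
  obtain ⟨s, hs, h, hh, rfl⟩ := decompSH hSd w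
  rw [EB_apply, eta_add_right]
  have h1' : etaPQ p q x s = 0 := by
    rw [eta_comm]; exact mem_orthH.mp hx s hs
  have h2' : etaPQ p q x h = 0 := eta_isotropic_of_forall hiso x hx h hh
  rw [h1', h2', add_zero]

lemma f_eq_id_of_orth_bot {f : (Fin (p+q) → ℝ) →ₗ[ℝ] (Fin (p+q) → ℝ)}
    {S : Submodule ℝ (Fin (p+q) → ℝ)} (hS : ∀ s ∈ S, f s = s)
    (hSd : Disjoint S ((EB p q).orthogonal S))
    (hbot : (EB p q).orthogonal S = ⊥) : ∀ v, f v = v := by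
  intro v
  obtain ⟨s, hs, h, hh, rfl⟩ := decompSH hSd v
  rw [hbot] at hh
  have hz : h = 0 := hh
  subst hz
  simpa using hS s hs

/-- The main induction for Cartan–Dieudonné. -/
lemma mainP : ∀ (d : ℕ) (f : (Fin (p+q) → ℝ) →ₗ[ℝ] (Fin (p+q) → ℝ)),
    (∀ v w, etaPQ p q (f v) (f w) = etaPQ p q v w) →
    ∀ (S : Submodule ℝ (Fin (p+q) → ℝ)), (∀ s ∈ S, f s = s) →
    Disjoint S ((EB p q).orthogonal S) →
    finrank ℝ ((EB p q).orthogonal S) ≤ d →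
    ∃ l : List (Fin (p+q) → ℝ), l.length ≤ d ∧ (∀ e ∈ l, etaPQ p q e e ≠ 0) ∧
      ∀ v, f v = l.foldr (reflectPQ p q) v := by
  intro d
  induction d with
  | zero =>
    intro f hf S hS hSd hd
    refine ⟨[], by simp, by simp, ?_⟩
    have hbot : (EB p q).orthogonal S = ⊥ := by
      rw [← Submodule.finrank_eq_zero (R := ℝ)]
      omega
    intro v
    simpa using f_eq_id_of_orth_bot hS hSd hbot v
  | succ d IH =>
    intro f hf S hS hSd hd
    -- Case A: `f` fixes an anisotropic vector of `H`.
    have caseA : ∀ (g : (Fin (p+q) → ℝ) →ₗ[ℝ] (Fin (p+q) → ℝ)),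
        (∀ v w, etaPQ p q (g v) (g w) = etaPQ p q v w) →
        (∀ s ∈ S, g s = s) →
        ∀ v ∈ (EB p q).orthogonal S, etaPQ p q v v ≠ 0 → g v = v →
        ∃ l : List (Fin (p+q) → ℝ), l.length ≤ d ∧ (∀ e ∈ l, etaPQ p q e e ≠ 0) ∧
          ∀ w, g w = l.foldr (reflectPQ p q) w := by
      intro g hg hgS v hv hQv hgv
      have hv0 : v ≠ 0 := by
        intro h0
        rw [h0] at hQv
        exact hQv (LinearMap.map_zero₂ (EB p q) 0)
      have hvS : v ∉ S := by
        intro hmem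
        have : v ∈ S ⊓ (EB p q).orthogonal S := ⟨hmem, hv⟩
        rw [disjoint_iff.mp hSd] at this
        exact hv0 this
      set S' := S ⊔ (ℝ ∙ v) with hS'def
      have hgS' : ∀ s ∈ S', g s = s := by
        intro s hs
        obtain ⟨x, hx, y, hy, rfl⟩ := Submodule.mem_sup.mp hs
        obtain ⟨a, rfl⟩ := Submodule.mem_span_singleton.mp hy
        rw [map_add, map_smul, hgS x hx, hgv]
      have hBv : ∀ y ∈ S', etaPQ p q y v = 0 → True := fun _ _ _ => trivial
      have hSd' : Disjoint S' ((EB p q).orthogonal S') := by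
        rw [disjoint_iff, Submodule.eq_bot_iff]
        rintro x ⟨hxS', hxO⟩
        obtain ⟨s, hsS, y, hy, rfl⟩ := Submodule.mem_sup.mp hxS'
        obtain ⟨a, rfl⟩ := Submodule.mem_span_singleton.mp hy
        have hvS' : v ∈ S' := Submodule.mem_sup_right (Submodule.mem_span_singleton_self v)
        have hxv : etaPQ p q v (s + a • v) = 0 :=
          mem_orthH.mp hxO v hvS'
        rw [eta_add_right, eta_smul_right] at hxv
        have hvs : etaPQ p q v s = 0 := by
          rw [eta_comm]; exact mem_orthH.mp hv s hsS
        rw [hvs, zero_add] at hxv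
        have ha : a = 0 := by
          rcases mul_eq_zero.mp hxv with h | h
          · exact h
          · exact absurd h hQv
        subst ha
        have hsO : s + (0:ℝ) • v ∈ (EB p q).orthogonal S := by
          have hle : (EB p q).orthogonal S' ≤ (EB p q).orthogonal S :=
            LinearMap.BilinForm.orthogonal_le le_sup_left
          exact hle hxO
        have : s + (0:ℝ) • v ∈ S := by simpa using hsS
        have hmem : s + (0:ℝ) • v ∈ S ⊓ (EB p q).orthogonal S := ⟨this, hsO⟩
        rw [disjoint_iff.mp hSd] at hmem
        exact hmem
      have hrankS' : finrank ℝ S' = finrank ℝ S + 1 := by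
        have hdisj : S ⊓ (ℝ ∙ v) = ⊥ := by
          rw [Submodule.eq_bot_iff]
          rintro x ⟨hxS, hxv⟩
          obtain ⟨a, rfl⟩ := Submodule.mem_span_singleton.mp hxv
          by_cases ha : a = 0
          · rw [ha, zero_smul]
          · exfalso
            apply hvS
            have : a⁻¹ • (a • v) ∈ S := S.smul_mem a⁻¹ hxS
            rwa [smul_smul, inv_mul_cancel₀ ha, one_smul] at this
        have hh := Submodule.finrank_sup_add_finrank_inf_eq S (ℝ ∙ v)
        rw [hdisj, finrank_bot, add_zero, finrank_span_singleton hv0] at hh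
        exact hh
      have hd' : finrank ℝ ((EB p q).orthogonal S') ≤ d := by
        rw [finrank_orthH] at hd ⊢
        rw [hrankS']
        have hsle : finrank ℝ S + 1 ≤ p + q := by
          have := Submodule.finrank_le S'
          rw [hrankS' ] at this
          rw [finrank_V] at this
          exact this
        omega
      exact IH g hg S' hgS' hSd' hd'
    -- Case B: `f` moves an anisotropic vector `v` of `H` with `f v - v` anisotropic.
    have caseB : ∀ (g : (Fin (p+q) → ℝ) →ₗ[ℝ] (Fin (p+q) → ℝ)),
        (∀ v w, etaPQ p q (g v) (g w) = etaPQ p q v w) →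
        (∀ s ∈ S, g s = s) →
        ∀ v ∈ (EB p q).orthogonal S, etaPQ p q v v ≠ 0 →
          etaPQ p q (g v - v) (g v - v) ≠ 0 →
        ∃ l : List (Fin (p+q) → ℝ), l.length ≤ d + 1 ∧ (∀ e ∈ l, etaPQ p q e e ≠ 0) ∧
          ∀ w, g w = l.foldr (reflectPQ p q) w := by
      intro g hg hgS v hv hQv hQe
      set e := g v - v with he_def
      have hg' : ∀ a b, etaPQ p q ((rmap p q e ∘ₗ g) a) ((rmap p q e ∘ₗ g) b)
          = etaPQ p q a b := by
        intro a b
        simp only [LinearMap.comp_apply, rmap_apply]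
        rw [reflect_iso e hQe, hg]
      have hgS'' : ∀ s ∈ S, (rmap p q e ∘ₗ g) s = s := by
        intro s hs
        simp only [LinearMap.comp_apply, rmap_apply]
        rw [hgS s hs]
        apply reflect_fix
        rw [he_def, eta_sub_left]
        have h1' : etaPQ p q (g v) s = 0 := by
          conv_lhs => rw [← hgS s hs]
          rw [hg]
          rw [eta_comm]
          exact mem_orthH.mp hv s hs
        have h2' : etaPQ p q v s = 0 := by
          rw [eta_comm]; exact mem_orthH.mp hv s hs
        rw [h1', h2', sub_zero]
      have hfixv : (rmap p q e ∘ₗ g) v = v := by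
        simp only [LinearMap.comp_apply, rmap_apply, he_def]
        exact reflect_swap (g v) v (hg v v) hQe
      obtain ⟨l', hl'len, hl'val, hl'fold⟩ :=
        caseA (rmap p q e ∘ₗ g) hg' hgS'' v hv hQv hfixv
      refine ⟨e :: l', by simpa using Nat.succ_le_succ hl'len, ?_, ?_⟩
      · intro x hx
        rcases List.mem_cons.mp hx with h | h
        · rw [h]; exact hQe
        · exact hl'val x h
      · intro w
        have := hl'fold w
        simp only [LinearMap.comp_apply, rmap_apply] at this
        rw [List.foldr_cons, ← this, reflect_reflect e hQe]
    -- Now the main case split.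
    by_cases hA : ∃ v ∈ (EB p q).orthogonal S, etaPQ p q v v ≠ 0 ∧ f v = v
    · obtain ⟨v, hv, hQv, hfv⟩ := hA
      obtain ⟨l, hlen, hval, hfold⟩ := caseA f hf hS v hv hQv hfv
      exact ⟨l, le_trans hlen (Nat.le_succ d), hval, hfold⟩
    by_cases hB : ∃ v ∈ (EB p q).orthogonal S, etaPQ p q v v ≠ 0 ∧
        etaPQ p q (f v - v) (f v - v) ≠ 0
    · obtain ⟨v, hv, hQv, hQe⟩ := hB
      exact caseB f hf hS v hv hQv hQe
    -- Bad case.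
    push_neg at hA hB
    have h1 : ∀ v ∈ (EB p q).orthogonal S, etaPQ p q v v ≠ 0 → f v ≠ v := hA
    have h2 : ∀ v ∈ (EB p q).orthogonal S, etaPQ p q v v ≠ 0 →
        etaPQ p q (f v - v) (f v - v) = 0 := hB
    by_cases hd'' : finrank ℝ ((EB p q).orthogonal S) ≤ d
    · obtain ⟨l, hlen, hval, hfold⟩ := IH f hf S hS hSd hd''
      exact ⟨l, le_trans hlen (Nat.le_succ d), hval, hfold⟩
    have hdim : finrank ℝ ((EB p q).orthogonal S) = d + 1 := by omega
    obtain ⟨hdet, heven⟩ := bad_struct f hf S hS hSd h1 h2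
    rw [hdim] at heven
    -- pick an anisotropic u in H
    have hex : ∃ u ∈ (EB p q).orthogonal S, etaPQ p q u u ≠ 0 := by
      by_contra hno
      push_neg at hno
      have hbot := orth_bot_of_isotropic hSd hno
      rw [hbot, finrank_bot] at hdim
      omega
    obtain ⟨u, huH, huQ⟩ := hex
    set g := rmap p q u ∘ₗ f with hgdef
    have hgiso : ∀ a b, etaPQ p q (g a) (g b) = etaPQ p q a b := by
      intro a b
      simp only [hgdef, LinearMap.comp_apply, rmap_apply]
      rw [reflect_iso u huQ, hf]
    have hgS : ∀ s ∈ S, g s = s := by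
      intro s hs
      simp only [hgdef, LinearMap.comp_apply, rmap_apply]
      rw [hS s hs]
      apply reflect_fix
      rw [eta_comm]
      exact mem_orthH.mp huH s hs
    have hdetg : LinearMap.det g = -1 := by
      rw [hgdef, LinearMap.det_comp, det_rmap u huQ, hdet, mul_one]
    -- g is not "bad", so it falls into case A or case B
    have hg_good : (∃ v ∈ (EB p q).orthogonal S, etaPQ p q v v ≠ 0 ∧ g v = v) ∨
        (∃ v ∈ (EB p q).orthogonal S, etaPQ p q v v ≠ 0 ∧
          etaPQ p q (g v - v) (g v - v) ≠ 0) := by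
      by_contra hno
      push_neg at hno
      obtain ⟨hno1, hno2⟩ := hno
      have h1g : ∀ v ∈ (EB p q).orthogonal S, etaPQ p q v v ≠ 0 → g v ≠ v := hno1
      have h2g : ∀ v ∈ (EB p q).orthogonal S, etaPQ p q v v ≠ 0 →
          etaPQ p q (g v - v) (g v - v) = 0 := hno2
      obtain ⟨hdetg', _⟩ := bad_struct g hgiso S hgS hSd h1g h2g
      rw [hdetg] at hdetg'
      norm_num at hdetg'
    -- get a list for g of length ≤ d + 1
    obtain ⟨lg, hlg_len, hlg_val, hlg_fold⟩ :
        ∃ l : List (Fin (p+q) → ℝ), l.length ≤ d + 1 ∧ (∀ e ∈ l, etaPQ p q e e ≠ 0) ∧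
          ∀ w, g w = l.foldr (reflectPQ p q) w := by
      rcases hg_good with ⟨v, hv, hQv, hgv⟩ | ⟨v, hv, hQv, hQe⟩
      · obtain ⟨l, hlen, hval, hfold⟩ := caseA g hgiso hgS v hv hQv hgv
        exact ⟨l, le_trans hlen (Nat.le_succ d), hval, hfold⟩
      · exact caseB g hgiso hgS v hv hQv hQe
    -- parity: length of lg is odd, d+1 is even, so length ≤ d
    have hpar : LinearMap.det g = (-1 : ℝ) ^ lg.length := det_foldr lg g hlg_val hlg_fold
    have hlg_le : lg.length ≤ d := by
      by_contra hgt
      push_neg at hgt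
      have hlen_eq : lg.length = d + 1 := le_antisymm hlg_len hgt
      rw [hlen_eq, Even.neg_one_pow heven, hdetg] at hpar
      norm_num at hpar
    refine ⟨u :: lg, by simpa using Nat.succ_le_succ hlg_le, ?_, ?_⟩
    · intro x hx
      rcases List.mem_cons.mp hx with h | h
      · rw [h]; exact huQ
      · exact hlg_val x h
    · intro w
      have := hlg_fold w
      simp only [hgdef, LinearMap.comp_apply, rmap_apply] at this
      rw [List.foldr_cons, ← this, reflect_reflect u huQ]

end Main

end CD


open CD in
/-- Cartan–Dieudonné: every isometry of the pseudo-Euclidean space ℝ^{p,q} is the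
composition of at most p+q reflections across non-degenerate hyperplanes. -/
theorem cartan_dieudonne (p q : ℕ)
    (f : (Fin (p + q) → ℝ) ≃ₗ[ℝ] (Fin (p + q) → ℝ))
    (hf : ∀ v w, etaPQ p q (f v) (f w) = etaPQ p q v w) :
    ∃ l : List (Fin (p + q) → ℝ), l.length ≤ p + q ∧
      (∀ e ∈ l, etaPQ p q e e ≠ 0) ∧
      ∀ v, f v = l.foldr (reflectPQ p q) v := by
  have hS : ∀ s ∈ (⊥ : Submodule ℝ (Fin (p+q) → ℝ)), f.toLinearMap s = s := by
    intro s hs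
    have : s = 0 := hs
    subst this
    simp
  have hSd : Disjoint (⊥ : Submodule ℝ (Fin (p+q) → ℝ))
      ((EB p q).orthogonal ⊥) := disjoint_bot_left
  have hd : Module.finrank ℝ ((EB p q).orthogonal (⊥ : Submodule ℝ (Fin (p+q) → ℝ)))
      ≤ p + q := by
    rw [finrank_orthH]
    omega
  obtain ⟨l, hlen, hval, hfold⟩ := mainP (p+q) f.toLinearMap hf ⊥ hS hSd hd
  exact ⟨l, hlen, hval, fun v => hfold v⟩
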